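/- arXiv:0810.5219 — 2 statements merged into one kernel-verified Lean document; each statement's English description precedes it below -/
import Mathlib

section
/- Let a1,...,an be positive integers with gcd(a1,...,an)=1 and n ≥ 2. Define F1(a) = max over residues r with 0 ≤ r < a_n of the minimum of x1*a1 + ... + x_{n-1}*a_{n-1} over nonnegative integers x1,...,x_{n-1} satisfying x1*a1 + ... + x_{n-1}*a_{n-1} ≡ r (mod a_n). Then the Frobenius number F(a) (the largest integer not representable as a nonnegative integer combination of a1,...,an) satisfies F(a) = F1(a) - a_n. -/
/-- The minimum of `x₁a₁ + ⋯ + x_{n-1}a_{n-1}` over nonnegative integer vectors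
whose value is congruent to `r` modulo `a_n`. -/
noncomputable def minOverResidue {n : ℕ} (a : Fin (n + 1) → ℕ) (r : ℕ) : ℕ :=
  sInf {s : ℕ | (∃ x : Fin n → ℕ, s = ∑ i, x i * a i.castSucc) ∧
    s % a (Fin.last n) = r}

/-- `F₁(a) = max_{0 ≤ r < aₙ} min {x₁a₁ + ⋯ + x_{n-1}a_{n-1} ≡ r (mod aₙ)}`. -/
noncomputable def F1 {n : ℕ} (a : Fin (n + 1) → ℕ) : ℕ :=
  (Finset.range (a (Fin.last n))).sup (fun r => minOverResidue a r)

/-- Bézout over a finite set. -/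
lemma bezout_finset {ι : Type*} [DecidableEq ι] (s : Finset ι) (f : ι → ℕ) :
    ∃ c : ι → ℤ, ∑ i ∈ s, c i * f i = s.gcd f := by
  classical
  induction s using Finset.induction with
  | empty => exact ⟨0, by simp⟩
  | @insert a s ha ih =>
    obtain ⟨c, hc⟩ := ih
    refine ⟨fun i => if i = a then Nat.gcdA (f a) (s.gcd f)
      else Nat.gcdB (f a) (s.gcd f) * c i, ?_⟩
    rw [Finset.sum_insert ha, Finset.gcd_insert]
    have hb := Nat.gcd_eq_gcd_ab (f a) (s.gcd f)
    have hsum : ∑ i ∈ s, (if i = a then Nat.gcdA (f a) (s.gcd f)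
        else Nat.gcdB (f a) (s.gcd f) * c i) * (f i : ℤ)
        = Nat.gcdB (f a) (s.gcd f) * ∑ i ∈ s, c i * f i := by
      rw [Finset.mul_sum]
      refine Finset.sum_congr rfl fun i hi => ?_
      have : i ≠ a := fun h => ha (h ▸ hi)
      rw [if_neg this]; ring
    rw [hsum, hc]
    simp only [if_pos rfl]
    have : (GCDMonoid.gcd (f a) (s.gcd f) : ℕ) = Nat.gcd (f a) (s.gcd f) := rfl
    rw [this]
    push_cast [hb]
    ring

/-- Every residue class mod `a (Fin.last n)` is attained. -/
lemma residue_attained {n : ℕ} (a : Fin (n + 1) → ℕ)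
    (hgcd : Finset.univ.gcd a = 1) (hN : 0 < a (Fin.last n))
    (r : ℕ) (hr : r < a (Fin.last n)) :
    ∃ x : Fin n → ℕ, (∑ i, x i * a i.castSucc) % a (Fin.last n) = r := by
  set N := a (Fin.last n) with hNdef
  obtain ⟨c, hc⟩ := bezout_finset Finset.univ a
  rw [hgcd] at hc
  have hz : ∑ i : Fin n, (c i.castSucc : ZMod N) * (a i.castSucc : ZMod N) = 1 := by
    have h2 := congrArg (Int.cast : ℤ → ZMod N) hc
    push_cast at h2
    rw [Fin.sum_univ_castSucc] at h2
    rw [← hNdef] at h2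
    simpa [ZMod.natCast_self] using h2
  set x : Fin n → ℕ := fun i => ((r * c i.castSucc) % (N : ℤ)).toNat with hx
  have hxz : ∀ i, ((x i : ℕ) : ZMod N) = (r : ZMod N) * (c i.castSucc : ZMod N) := by
    intro i
    have h0 : (0 : ℤ) ≤ ((r : ℤ) * c i.castSucc) % (N : ℤ) :=
      Int.emod_nonneg _ (by exact_mod_cast hN.ne')
    have h1 : ((x i : ℤ) : ZMod N) = (((r : ℤ) * c i.castSucc : ℤ) : ZMod N) := by
      simp only [hx]
      rw [Int.toNat_of_nonneg h0, ZMod.intCast_mod]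
    push_cast at h1
    exact h1
  have key : ((∑ i, x i * a i.castSucc : ℕ) : ZMod N) = (r : ZMod N) := by
    push_cast
    simp only [hxz]
    simp only [mul_assoc]
    rw [← Finset.mul_sum, hz, mul_one]
  refine ⟨x, ?_⟩
  have := (ZMod.natCast_eq_natCast_iff' _ _ _).mp key
  rwa [Nat.mod_eq_of_lt hr] at this

/-- The defining set of `minOverResidue` is nonempty for `r < a (Fin.last n)`. -/
lemma residue_set_nonempty {n : ℕ} (a : Fin (n + 1) → ℕ)
    (hgcd : Finset.univ.gcd a = 1) (hN : 0 < a (Fin.last n))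
    (r : ℕ) (hr : r < a (Fin.last n)) :
    {s : ℕ | (∃ x : Fin n → ℕ, s = ∑ i, x i * a i.castSucc) ∧
      s % a (Fin.last n) = r}.Nonempty := by
  obtain ⟨x, hx⟩ := residue_attained a hgcd hN r hr
  exact ⟨∑ i, x i * a i.castSucc, ⟨x, rfl⟩, hx⟩

/-- Representability criterion. -/
lemma repr_iff {n : ℕ} (a : Fin (n + 1) → ℕ)
    (hgcd : Finset.univ.gcd a = 1) (hN : 0 < a (Fin.last n)) (m : ℕ) :
    (∃ x : Fin (n + 1) → ℕ, m = ∑ i, x i * a i) ↔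
      minOverResidue a (m % a (Fin.last n)) ≤ m := by
  constructor
  · rintro ⟨x, rfl⟩
    rw [Fin.sum_univ_castSucc]
    have hmem : (∑ i : Fin n, x i.castSucc * a i.castSucc) ∈ {t : ℕ |
        (∃ y : Fin n → ℕ, t = ∑ i, y i * a i.castSucc) ∧
        t % a (Fin.last n) = (∑ i : Fin n, x i.castSucc * a i.castSucc
          + x (Fin.last n) * a (Fin.last n)) % a (Fin.last n)} :=
      ⟨⟨fun i => x i.castSucc, rfl⟩, (Nat.add_mul_mod_self_right _ _ _).symm⟩
    exact le_trans (Nat.sInf_le hmem) (Nat.le_add_right _ _)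
  · intro hle
    have hne := residue_set_nonempty a hgcd hN (m % a (Fin.last n)) (Nat.mod_lt _ hN)
    obtain ⟨⟨x, hx⟩, hmod⟩ := Nat.sInf_mem hne
    have hx' : minOverResidue a (m % a (Fin.last n)) = ∑ i, x i * a i.castSucc := hx
    have hmod' : minOverResidue a (m % a (Fin.last n)) % a (Fin.last n)
        = m % a (Fin.last n) := hmod
    have hdvd : a (Fin.last n) ∣ m - minOverResidue a (m % a (Fin.last n)) :=
      (Nat.modEq_iff_dvd' hle).mp hmod'
    obtain ⟨k, hk⟩ := hdvd
    refine ⟨Fin.snoc x k, ?_⟩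
    rw [Fin.sum_univ_castSucc]
    simp only [Fin.snoc_castSucc, Fin.snoc_last]
    calc m = a (Fin.last n) * k + minOverResidue a (m % a (Fin.last n)) :=
        (Nat.sub_eq_iff_eq_add hle).mp hk
      _ = (∑ i : Fin n, x i * a i.castSucc) + k * a (Fin.last n) := by
        rw [hx']; ring

theorem frobenius_eq_F1_sub_last {n : ℕ} (hn : 1 ≤ n) (a : Fin (n + 1) → ℕ)
    (hpos : ∀ i, 0 < a i)
    (hgcd : Finset.univ.gcd a = 1)
    (F : ℕ)
    (hF : IsGreatest {m : ℕ | ¬ ∃ x : Fin (n + 1) → ℕ, m = ∑ i, x i * a i} F) :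
    F = F1 a - a (Fin.last n) := by
  have hN : 0 < a (Fin.last n) := hpos _
  have hrep := repr_iff a hgcd hN
  -- F is not representable
  have hFlt : F < minOverResidue a (F % a (Fin.last n)) := by
    have h := hF.1
    rw [Set.mem_setOf_eq, hrep F] at h
    omega
  have hmodF : minOverResidue a (F % a (Fin.last n)) % a (Fin.last n)
      = F % a (Fin.last n) :=
    (Nat.sInf_mem (residue_set_nonempty a hgcd hN _ (Nat.mod_lt _ hN))).2
  -- hence F + a_n ≤ minOverResidue a (F % a_n)
  have hdvdF : a (Fin.last n) ∣ minOverResidue a (F % a (Fin.last n)) - F :=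
    (Nat.modEq_iff_dvd' hFlt.le).mp hmodF.symm
  obtain ⟨k, hk⟩ := hdvdF
  have hk1 : 1 ≤ k := by
    rcases Nat.eq_zero_or_pos k with h0 | h1
    · exfalso; rw [h0, mul_zero] at hk; omega
    · exact h1
  have hNle : a (Fin.last n) ≤ a (Fin.last n) * k := Nat.le_mul_of_pos_right _ hk1
  have h1 : F + a (Fin.last n) ≤ minOverResidue a (F % a (Fin.last n)) := by omega
  have h2 : minOverResidue a (F % a (Fin.last n)) ≤ F1 a :=
    Finset.le_sup (Finset.mem_range.mpr (Nat.mod_lt _ hN))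
  have hup : F + a (Fin.last n) ≤ F1 a := le_trans h1 h2
  -- reverse direction
  obtain ⟨r, hrmem, hrsup⟩ := Finset.exists_mem_eq_sup (Finset.range (a (Fin.last n)))
    ⟨0, Finset.mem_range.mpr hN⟩ (fun r => minOverResidue a r)
  have hr : r < a (Fin.last n) := Finset.mem_range.mp hrmem
  have hF1M : F1 a = minOverResidue a r := hrsup
  have hmodM : minOverResidue a r % a (Fin.last n) = r :=
    (Nat.sInf_mem (residue_set_nonempty a hgcd hN r hr)).2
  have hMN : a (Fin.last n) ≤ minOverResidue a r := by omega
  have hnonrep : ¬ ∃ x : Fin (n + 1) → ℕ,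
      minOverResidue a r - a (Fin.last n) = ∑ i, x i * a i := by
    intro h
    rw [hrep] at h
    have hmm : (minOverResidue a r - a (Fin.last n)) % a (Fin.last n)
        = minOverResidue a r % a (Fin.last n) := by
      conv_rhs => rw [show minOverResidue a r
        = (minOverResidue a r - a (Fin.last n)) + a (Fin.last n) by omega]
      rw [Nat.add_mod_right]
    rw [hmm, hmodM] at h
    omega
  have hle : minOverResidue a r - a (Fin.last n) ≤ F := hF.2 hnonrep
  omega
end

section
/- Let α ∈ (0,1) be irrational with continued fraction expansion [0; h1, h2, ...] and convergents p_s/q_s. If S = [[P, P'], [Q, Q']] is a matrix in M (integer entries, det = ±1, 1 ≤ Q ≤ Q', 0 ≤ P ≤ Q, 1 ≤ P' ≤ Q') such that 0 < (Q'α - P')/(-Qα + P) < 1, then there exists s ≥ 1 with P/Q = [0; h1, ..., h_{s-1}], P'/Q' = [0; h1, ..., h_s], and moreover Q/Q' = [0; h_s, h_{s-1}, ..., h1] and (Q'α - P')/(-Qα + P) = [0; h_{s+1}, h_{s+2}, ...]. -/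
open Filter Topology

/-- Value of the finite continued fraction `[0; a₁, …, aₙ]`. -/
noncomputable def cfVal (l : List ℕ) : ℝ :=
  l.foldr (fun a x => 1 / ((a : ℝ) + x)) 0

namespace CFAux

noncomputable def cfT (l : List ℕ) (x : ℝ) : ℝ :=
  l.foldr (fun a x => 1 / ((a : ℝ) + x)) x

lemma cfVal_eq_cfT (l : List ℕ) : cfVal l = cfT l 0 := rfl

lemma cfT_append (l l' : List ℕ) (x : ℝ) : cfT (l ++ l') x = cfT l (cfT l' x) := by
  simp [cfT, List.foldr_append]

lemma cfT_cons (a : ℕ) (l : List ℕ) (x : ℝ) : cfT (a :: l) x = 1 / ((a : ℝ) + cfT l x) := rfl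

lemma cfT_nonneg : ∀ (l : List ℕ) (x : ℝ), 0 ≤ x → 0 ≤ cfT l x
  | [], _, hx => hx
  | a :: l, x, hx => by
      have h1 := cfT_nonneg l x hx
      rw [cfT_cons]
      have h2 : (0:ℝ) ≤ (a:ℝ) + cfT l x := by positivity
      positivity

lemma tprime_aux (N D a : ℝ) (ha : 1 ≤ a) (hN : 0 < N) (hD : 0 < D) (hND : N < D) :
    0 < D / (N + a * D) ∧ D / (N + a * D) < 1 := by
  have hpos : 0 < N + a * D := by nlinarith
  refine ⟨div_pos hD hpos, ?_⟩
  rw [div_lt_one hpos]; nlinarith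

lemma tprime_bounds (N D a : ℝ) (ha : 1 ≤ a) (h0 : 0 < N / D) (h1 : N / D < 1) :
    0 < D / (N + a * D) ∧ D / (N + a * D) < 1 := by
  rcases div_pos_iff.mp h0 with ⟨hN, hD⟩ | ⟨hN, hD⟩
  · exact tprime_aux N D a ha hN hD (by rwa [div_lt_one hD] at h1)
  · have h1' : (-N) / (-D) < 1 := by rwa [neg_div_neg_eq]
    have hND : -N < -D := by rwa [div_lt_one (by linarith)] at h1'
    have key := tprime_aux (-N) (-D) a ha (by linarith) (by linarith) hND
    have heq : (-D) / (-N + a * -D) = D / (N + a * D) := by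
      rw [show (-N + a * -D) = -(N + a * D) by ring, neg_div_neg_eq]
    rw [heq] at key; exact key


lemma q_pos (h q : ℕ → ℕ) (hh : ∀ s, 1 ≤ s → 1 ≤ h s) (hq0 : q 0 = 1) (hq1 : q 1 = h 1)
    (hqrec : ∀ s, 2 ≤ s → q s = h s * q (s - 1) + q (s - 2)) : ∀ k, 1 ≤ q k := by
  intro k
  induction k using Nat.strong_induction_on with
  | _ k ih =>
    match k with
    | 0 => omega
    | 1 => have := hh 1 (by omega); omega
    | (n+2) =>
      have hr := hqrec (n+2) (by omega)
      have e1 : n+2-1 = n+1 := by omega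
      have e2 : n+2-2 = n := by omega
      rw [e1, e2] at hr
      have h1 := ih n (by omega)
      exact hr ▸ le_trans h1 (Nat.le_add_left _ _)

lemma q_ge (h q : ℕ → ℕ) (hh : ∀ s, 1 ≤ s → 1 ≤ h s) (hq0 : q 0 = 1) (hq1 : q 1 = h 1)
    (hqrec : ∀ s, 2 ≤ s → q s = h s * q (s - 1) + q (s - 2)) : ∀ k, 1 ≤ k → k ≤ q k := by
  have qpos := q_pos h q hh hq0 hq1 hqrec
  intro k hk
  induction k, hk using Nat.le_induction with
  | base => rw [hq1]; exact hh 1 (by omega)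
  | succ m hm ih =>
    have hr := hqrec (m+1) (by omega)
    have e1 : m+1-1 = m := by omega
    have e2 : m+1-2 = m-1 := by omega
    rw [e1, e2] at hr
    have h1 := qpos (m-1)
    have h2 := hh (m+1) (by omega)
    have h3 : q m ≤ h (m+1) * q m := Nat.le_mul_of_pos_left _ (by omega)
    omega
-- E-recurrence
lemma Erec (α : ℝ) (h p q : ℕ → ℕ) (hqrec : ∀ s, 2 ≤ s → q s = h s * q (s - 1) + q (s - 2))
    (hprec : ∀ s, 2 ≤ s → p s = h s * p (s - 1) + p (s - 2))
    (s : ℕ) (hs : 2 ≤ s) :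
    (q s : ℝ) * α - p s
      = (h s : ℝ) * ((q (s-1) : ℝ) * α - p (s-1)) + ((q (s-2) : ℝ) * α - p (s-2)) := by
  have h1 := hqrec s hs
  have h2 := hprec s hs
  have h1' : (q s : ℝ) = (h s : ℝ) * q (s-1) + q (s-2) := by exact_mod_cast congrArg (Nat.cast (R := ℝ)) h1
  have h2' : (p s : ℝ) = (h s : ℝ) * p (s-1) + p (s-2) := by exact_mod_cast congrArg (Nat.cast (R := ℝ)) h2
  rw [h1', h2']; ring

lemma Edec (α : ℝ) (h p q : ℕ → ℕ) (hh : ∀ s, 1 ≤ s → 1 ≤ h s)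
    (hqrec : ∀ s, 2 ≤ s → q s = h s * q (s - 1) + q (s - 2))
    (hprec : ∀ s, 2 ≤ s → p s = h s * p (s - 1) + p (s - 2))
    (hconv : ∀ s : ℕ, 0 < (-1 : ℝ) ^ s * ((q s : ℝ) * α - (p s : ℝ)) ∧
      |(q s : ℝ) * α - (p s : ℝ)| < 1 / (q (s + 1) : ℝ))
    (k : ℕ) :
    (-1 : ℝ)^(k+1) * ((q (k+1) : ℝ) * α - p (k+1)) < (-1 : ℝ)^k * ((q k : ℝ) * α - p k) := by
  have hr := Erec α h p q hqrec hprec (k+2) (by omega)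
  have e1 : k+2-1 = k+1 := by omega
  have e2 : k+2-2 = k := by omega
  rw [e1, e2] at hr
  have A := (hconv (k+2)).1
  have B := (hconv (k+1)).1
  have hk2 : (1:ℝ) ≤ (h (k+2) : ℝ) := by exact_mod_cast hh (k+2) (by omega)
  have hpow : (-1 : ℝ)^(k+2) = (-1:ℝ)^k := by rw [pow_succ, pow_succ]; ring
  rw [hpow] at A
  have hpow1 : (-1 : ℝ)^(k+1) = -(-1:ℝ)^k := by rw [pow_succ]; ring
  rw [hpow1] at B ⊢
  have key : (-1:ℝ)^k * ((q k : ℝ) * α - p k)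
      = (-1:ℝ)^k * ((q (k+2) : ℝ) * α - p (k+2))
        + (h (k+2) : ℝ) * (-(-1:ℝ)^k * ((q (k+1) : ℝ) * α - p (k+1))) := by
    linear_combination (-(-1:ℝ)^k) * hr
  nlinarith [B, A, mul_le_mul_of_nonneg_right hk2 B.le]
lemma prefix_val (h p q : ℕ → ℕ) (hh : ∀ s, 1 ≤ s → 1 ≤ h s) (hq0 : q 0 = 1) (hq1 : q 1 = h 1)
    (hqrec : ∀ s, 2 ≤ s → q s = h s * q (s - 1) + q (s - 2))
    (hp0 : p 0 = 0) (hp1 : p 1 = 1)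
    (hprec : ∀ s, 2 ≤ s → p s = h s * p (s - 1) + p (s - 2))
    (qpos : ∀ k, 1 ≤ q k) :
    ∀ m, 1 ≤ m → ∀ x : ℝ, 0 ≤ x →
      cfT ((List.range' 1 m).map h) x
        = ((p m : ℝ) + (p (m-1) : ℝ) * x) / ((q m : ℝ) + (q (m-1) : ℝ) * x) := by
  intro m hm
  induction m, hm using Nat.le_induction with
  | base =>
    intro x hx
    simp [cfT, hq0, hq1, hp0, hp1]
  | succ m hm ih =>
    intro x hx
    have hcat : List.range' 1 (m+1) = List.range' 1 m ++ [1 + m] := by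
      simpa using (List.range'_concat : List.range' 1 (m+1) = _)
    have hidx : 1 + m = m + 1 := by omega
    rw [hcat, hidx, List.map_append, cfT_append]
    have hsingle : cfT ([m+1].map h) x = 1 / ((h (m+1) : ℝ) + x) := by
      simp [cfT]
    rw [hsingle]
    have hH : (1:ℝ) ≤ (h (m+1) : ℝ) := by exact_mod_cast hh (m+1) (by omega)
    have hHx : (0:ℝ) < (h (m+1) : ℝ) + x := by linarith
    have hy : (0:ℝ) ≤ 1 / ((h (m+1) : ℝ) + x) := by positivity
    rw [ih _ hy]
    have e1 : m+1-1 = m := by omega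
    have e2 : m+1-2 = m-1 := by omega
    have hpr := hprec (m+1) (by omega); rw [e1, e2] at hpr
    have hqr := hqrec (m+1) (by omega); rw [e1, e2] at hqr
    have hpr' : (p (m+1) : ℝ) = (h (m+1) : ℝ) * p m + p (m-1) := by exact_mod_cast congrArg (Nat.cast (R := ℝ)) hpr
    have hqr' : (q (m+1) : ℝ) = (h (m+1) : ℝ) * q m + q (m-1) := by exact_mod_cast congrArg (Nat.cast (R := ℝ)) hqr
    have hqm : (1:ℝ) ≤ (q m : ℝ) := by exact_mod_cast qpos m
    have hqm1 : (0:ℝ) ≤ (q (m-1) : ℝ) := by positivity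
    have hd1 : (0:ℝ) < (q m : ℝ) + (q (m-1) : ℝ) * (1 / ((h (m+1) : ℝ) + x)) := by positivity
    have hd2 : (0:ℝ) < (q (m+1) : ℝ) + (q m : ℝ) * x := by
      rw [hqr']; nlinarith
    simp only [Nat.add_sub_cancel]
    rw [div_eq_div_iff hd1.ne' hd2.ne', hpr', hqr']
    field_simp
    ring

lemma mirror_val (h p q : ℕ → ℕ) (hh : ∀ s, 1 ≤ s → 1 ≤ h s) (hq0 : q 0 = 1) (hq1 : q 1 = h 1)
    (hqrec : ∀ s, 2 ≤ s → q s = h s * q (s - 1) + q (s - 2))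
    (qpos : ∀ k, 1 ≤ q k) :
    ∀ m, 1 ≤ m → cfVal (((List.range' 1 m).map h).reverse) = (q (m-1) : ℝ) / (q m : ℝ) := by
  intro m hm
  induction m, hm using Nat.le_induction with
  | base =>
    simp [cfVal, hq0, hq1]
  | succ m hm ih =>
    have hcat : List.range' 1 (m+1) = List.range' 1 m ++ [1 + m] := by
      simpa using (List.range'_concat : List.range' 1 (m+1) = _)
    have hidx : 1 + m = m + 1 := by omega
    rw [hcat, hidx, List.map_append, List.reverse_append]
    have : ([m+1].map h).reverse = [h (m+1)] := by simp
    rw [this]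
    have hcons : cfVal (h (m+1) :: ((List.range' 1 m).map h).reverse)
        = 1 / ((h (m+1) : ℝ) + cfVal (((List.range' 1 m).map h).reverse)) := rfl
    rw [List.singleton_append, hcons, ih]
    have e1 : m+1-1 = m := by omega
    have e2 : m+1-2 = m-1 := by omega
    have hqr := hqrec (m+1) (by omega); rw [e1, e2] at hqr
    have hqr' : (q (m+1) : ℝ) = (h (m+1) : ℝ) * q m + q (m-1) := by exact_mod_cast congrArg (Nat.cast (R := ℝ)) hqr
    have hqm : (0:ℝ) < (q m : ℝ) := by exact_mod_cast qpos m
    have hqm1' : (0:ℝ) < (q (m+1) : ℝ) := by exact_mod_cast qpos (m+1)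
    have hH : (1:ℝ) ≤ (h (m+1) : ℝ) := by exact_mod_cast hh (m+1) (by omega)
    have hden : (0:ℝ) < (h (m+1) : ℝ) + (q (m-1) : ℝ) / q m := by positivity
    simp only [Nat.add_sub_cancel]
    rw [div_eq_div_iff hden.ne' hqm1'.ne', hqr']
    field_simp


lemma tail_tendsto (α : ℝ) (h p q : ℕ → ℕ)
    (hh : ∀ s, 1 ≤ s → 1 ≤ h s) (hq0 : q 0 = 1) (hq1 : q 1 = h 1)
    (hqrec : ∀ s, 2 ≤ s → q s = h s * q (s - 1) + q (s - 2))
    (hp0 : p 0 = 0) (hp1 : p 1 = 1)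
    (hprec : ∀ s, 2 ≤ s → p s = h s * p (s - 1) + p (s - 2))
    (hconv : ∀ s : ℕ, 0 < (-1 : ℝ) ^ s * ((q s : ℝ) * α - (p s : ℝ)) ∧
      |(q s : ℝ) * α - (p s : ℝ)| < 1 / (q (s + 1) : ℝ))
    (s : ℕ) (hs : 1 ≤ s) :
    Tendsto (fun m : ℕ => cfVal ((List.range' (s+1) m).map h)) atTop
      (𝓝 (((q s : ℝ) * α - p s) / (-(q (s-1) : ℝ) * α + p (s-1)))) := by
  have qpos := q_pos h q hh hq0 hq1 hqrec
  have qge := q_ge h q hh hq0 hq1 hqrec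
  set y : ℕ → ℝ := fun m => (p (s+m) : ℝ) / (q (s+m)) with hydef
  -- y m → α
  have hbound : ∀ m : ℕ, ‖y m - α‖ ≤ 1 / ((m:ℝ)+1) := by
    intro m
    have hq1' : (1:ℝ) ≤ (q (s+m) : ℝ) := by exact_mod_cast qpos (s+m)
    have hq2 : (m:ℝ)+1 ≤ (q (s+m+1) : ℝ) := by
      have h1 : m+1 ≤ q (s+m+1) := le_trans (by omega) (qge (s+m+1) (by omega))
      exact_mod_cast h1
    have habs := (hconv (s+m)).2
    have hyd : y m - α = ((p (s+m) : ℝ) - (q (s+m) : ℝ) * α) / (q (s+m) : ℝ) := by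
      simp only [hydef]; field_simp
    rw [hyd, Real.norm_eq_abs, abs_div, abs_of_pos (by linarith : (0:ℝ) < (q (s+m):ℝ))]
    have h3 : |(p (s+m) : ℝ) - (q (s+m) : ℝ) * α| / (q (s+m) : ℝ)
        ≤ |(p (s+m) : ℝ) - (q (s+m) : ℝ) * α| :=
      div_le_self (abs_nonneg _) hq1'
    have h4 : |(p (s+m) : ℝ) - (q (s+m) : ℝ) * α| = |(q (s+m) : ℝ) * α - (p (s+m) : ℝ)| :=
      abs_sub_comm _ _
    have h5 : 1 / (q (s+m+1) : ℝ) ≤ 1 / ((m:ℝ)+1) :=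
      one_div_le_one_div_of_le (by positivity) hq2
    calc |(p (s+m) : ℝ) - (q (s+m) : ℝ) * α| / (q (s+m) : ℝ)
        ≤ |(p (s+m) : ℝ) - (q (s+m) : ℝ) * α| := h3
      _ = |(q (s+m) : ℝ) * α - (p (s+m) : ℝ)| := h4
      _ ≤ 1 / (q (s+m+1) : ℝ) := habs.le
      _ ≤ 1 / ((m:ℝ)+1) := h5
  have hylim : Tendsto y atTop (𝓝 α) := by
    rw [← tendsto_sub_nhds_zero_iff]
    exact squeeze_zero_norm hbound tendsto_one_div_add_atTop_nhds_zero_nat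
  -- limit denominator nonzero
  have hc0 := (hconv (s-1)).1
  have hcne : (q (s-1) : ℝ) * α - p (s-1) ≠ 0 := by
    intro hz; rw [hz, mul_zero] at hc0; exact lt_irrefl 0 hc0
  set c : ℕ → ℝ := fun m => (q (s-1) : ℝ) * y m - p (s-1) with hcdef
  have hclim : Tendsto c atTop (𝓝 ((q (s-1) : ℝ) * α - p (s-1))) :=
    (tendsto_const_nhds.mul hylim).sub tendsto_const_nhds
  have hev : ∀ᶠ m in atTop, c m ≠ 0 := hclim.eventually_ne hcne
  -- key identity
  have key : ∀ m : ℕ, y m * ((q s : ℝ) + (q (s-1) : ℝ) * cfVal ((List.range' (s+1) m).map h))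
      = (p s : ℝ) + (p (s-1) : ℝ) * cfVal ((List.range' (s+1) m).map h) := by
    intro m
    set u := cfVal ((List.range' (s+1) m).map h) with hudef
    have hu0 : 0 ≤ u := by rw [hudef, cfVal_eq_cfT]; exact cfT_nonneg _ _ le_rfl
    have hsplit : List.range' 1 (s+m) = List.range' 1 s ++ List.range' (s+1) m := by
      have : List.range' 1 s ++ List.range' (1 + s) m = List.range' 1 (m + s) := by
        rw [Nat.add_comm m s]; exact List.range'_append_1
      rw [show 1 + s = s + 1 by omega, show m + s = s + m by omega] at this
      exact this.symm
    have h1 : cfVal ((List.range' 1 (s+m)).map h) = cfT ((List.range' 1 s).map h) u := by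
      rw [cfVal_eq_cfT, hsplit, List.map_append, cfT_append, hudef, cfVal_eq_cfT]
    have h2 := prefix_val h p q hh hq0 hq1 hqrec hp0 hp1 hprec qpos (s+m) (by omega) 0 le_rfl
    have h3 := prefix_val h p q hh hq0 hq1 hqrec hp0 hp1 hprec qpos s hs u hu0
    rw [cfVal_eq_cfT] at h1
    rw [h2] at h1
    rw [h3] at h1
    have hqsm : (0:ℝ) < (q (s+m) : ℝ) := by exact_mod_cast qpos (s+m)
    have hqs : (1:ℝ) ≤ (q s : ℝ) := by exact_mod_cast qpos s
    have hden : (0:ℝ) < (q s : ℝ) + (q (s-1) : ℝ) * u := by positivity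
    have h4 : y m = ((p s : ℝ) + (p (s-1) : ℝ) * u) / ((q s : ℝ) + (q (s-1) : ℝ) * u) := by
      simp only [hydef]
      simp only [mul_zero, add_zero] at h1
      exact h1
    rw [h4, div_mul_cancel₀ _ hden.ne']
  -- eventually u m = ψ (y m)
  have hev2 : ∀ᶠ m in atTop, cfVal ((List.range' (s+1) m).map h)
      = ((p s : ℝ) - y m * q s) / c m := by
    filter_upwards [hev] with m hm
    have k := key m
    rw [eq_div_iff hm, hcdef]
    linear_combination k
  have hψ : Tendsto (fun m => ((p s : ℝ) - y m * q s) / c m) atTop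
      (𝓝 (((p s : ℝ) - α * q s) / ((q (s-1) : ℝ) * α - p (s-1)))) :=
    Tendsto.div (tendsto_const_nhds.sub (hylim.mul tendsto_const_nhds)) hclim hcne
  have hval : ((p s : ℝ) - α * q s) / ((q (s-1) : ℝ) * α - p (s-1))
      = ((q s : ℝ) * α - p s) / (-(q (s-1) : ℝ) * α + p (s-1)) := by
    have hne2 : -(q (s-1) : ℝ) * α + p (s-1) ≠ 0 := by
      intro h0; apply hcne; linarith
    rw [div_eq_div_iff hcne hne2]; ring
  rw [← hval]
  exact hψ.congr' (Filter.EventuallyEq.symm hev2)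
lemma sum_eq (a b Es Es1 Es2 Nv : ℝ) (hEs : Es ≠ 0) (hN : Nv = Es1 + a * Es)
    (hrec : Es2 = b * Es + Es1) : a + Nv / (-Es) = b + Es2 / (-Es) := by
  have hEs' : -Es ≠ 0 := neg_ne_zero.mpr hEs
  field_simp
  linear_combination hrec - hN

set_option maxHeartbeats 2000000 in
lemma core (α : ℝ) (hα : α ∈ Set.Ioo (0 : ℝ) 1) (h p q : ℕ → ℕ)
    (hh : ∀ s, 1 ≤ s → 1 ≤ h s) (hq0 : q 0 = 1) (hq1 : q 1 = h 1)
    (hqrec : ∀ s, 2 ≤ s → q s = h s * q (s - 1) + q (s - 2))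
    (hp0 : p 0 = 0) (hp1 : p 1 = 1)
    (hprec : ∀ s, 2 ≤ s → p s = h s * p (s - 1) + p (s - 2))
    (hconv : ∀ s : ℕ, 0 < (-1 : ℝ) ^ s * ((q s : ℝ) * α - (p s : ℝ)) ∧
      |(q s : ℝ) * α - (p s : ℝ)| < 1 / (q (s + 1) : ℝ)) :
    ∀ n : ℕ, ∀ P P' Q Q' : ℤ, Q' ≤ (n : ℤ) →
      (P * Q' - P' * Q = 1 ∨ P * Q' - P' * Q = -1) →
      1 ≤ Q → Q ≤ Q' → 0 ≤ P → P ≤ Q → 1 ≤ P' → P' ≤ Q' →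
      0 < ((Q' : ℝ) * α - P') / (-(Q : ℝ) * α + P) →
      ((Q' : ℝ) * α - P') / (-(Q : ℝ) * α + P) < 1 →
      ∃ s : ℕ, 1 ≤ s ∧ P = (p (s-1) : ℤ) ∧ Q = (q (s-1) : ℤ)
        ∧ P' = (p s : ℤ) ∧ Q' = (q s : ℤ) := by
  intro n
  induction n with
  | zero =>
    intro P P' Q Q' hn _ hQ hQQ' _ _ _ _ _ _
    exfalso; omega
  | succ n ih =>
    intro P P' Q Q' hn hdet hQ hQQ' hP0 hPQ hP' hP'Q' ht0 ht1
    have hα0 : 0 < α := hα.1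
    by_cases hP : P = 0
    · -- base case : s = 1
      have hPQ1 : P' * Q = 1 := by
        rcases hdet with hd | hd
        · exfalso; rw [hP] at hd
          have h1 : 0 < P' * Q := mul_pos (by omega) (by omega)
          linarith
        · rw [hP] at hd; linarith
      have hP'1 : P' = 1 := by
        have h2 : P' * 1 ≤ P' * Q := mul_le_mul_of_nonneg_left hQ (by omega)
        omega
      have hQ1 : Q = 1 := by
        have h2 : 1 * Q ≤ P' * Q := mul_le_mul_of_nonneg_right hP' (by omega)
        omega
      have hPR : (P : ℝ) = 0 := by exact_mod_cast hP
      have hQR : (Q : ℝ) = 1 := by exact_mod_cast hQ1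
      have hP'R : (P' : ℝ) = 1 := by exact_mod_cast hP'1
      have hdne : -(Q : ℝ) * α + P ≠ 0 := by
        rw [hPR, hQR]
        intro hz
        have : α = 0 := by linarith
        linarith
      have hteq : ((Q' : ℝ) * α - P') / (-(Q : ℝ) * α + P) = (1 - (Q' : ℝ) * α) / α := by
        rw [div_eq_div_iff hdne hα0.ne', hPR, hQR, hP'R]; ring
      rw [hteq] at ht0 ht1
      have hu1 : 0 < 1 - (Q' : ℝ) * α := by
        rcases div_pos_iff.mp ht0 with ⟨hx, _⟩ | ⟨_, hx⟩
        · exact hx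
        · linarith
      have hu2 : 1 - (Q' : ℝ) * α < α := (div_lt_one hα0).mp ht1
      -- facts about h 1
      have hc1 := (hconv 1).1
      rw [hq1, hp1] at hc1
      have habs1 := (hconv 1).2
      rw [hq1, hp1] at habs1
      have hc2 := (hconv 2).1
      have hp2 : 1 ≤ p 2 := by
        have := hprec 2 (by omega)
        have h2 := hh 2 (by omega)
        simp [hp0, hp1] at this
        omega
      have hq2p : 1 ≤ q 2 := by
        have := hqrec 2 (by omega)
        have h2 := hh 2 (by omega)
        simp [hq0, hq1] at this
        exact this ▸ Nat.le_add_left 1 _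
      have hq2R : (1:ℝ) ≤ (q 2 : ℝ) := by exact_mod_cast hq2p
      have hp2R : (1:ℝ) ≤ (p 2 : ℝ) := by exact_mod_cast hp2
      have hA : (h 1 : ℝ) * α < 1 := by
        have : (0:ℝ) < (-1)^1 * (((h 1 : ℕ) : ℝ) * α - ((1:ℕ) : ℝ)) := hc1
        rw [pow_one] at this
        push_cast at this
        linarith
      have hc2' : (p 2 : ℝ) < (q 2 : ℝ) * α := by
        have h5 : (0:ℝ) < (-1)^2 * ((q 2 : ℝ) * α - (p 2 : ℝ)) := hc2
        norm_num at h5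
        linarith
      have hq2α : 1 < (q 2 : ℝ) * α := by linarith
      have habs1' : 1 - (h 1 : ℝ) * α < 1 / (q 2 : ℝ) := by
        have h4 : |((h 1 : ℕ) : ℝ) * α - ((1:ℕ):ℝ)| < 1 / (q 2 : ℝ) := habs1
        push_cast at h4
        rw [abs_of_neg (by linarith)] at h4
        linarith
      have hq2inv : 1 / (q 2 : ℝ) < α := by
        rw [div_lt_iff₀ (by linarith : (0:ℝ) < (q 2 : ℝ))]
        linarith
      have hB : 1 < ((h 1 : ℝ) + 1) * α := by nlinarith [habs1', hq2inv]
      -- uniqueness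
      have k1 : (Q' : ℝ) < (h 1 : ℝ) + 1 := by
        have : (Q' : ℝ) * α < ((h 1 : ℝ) + 1) * α := by linarith
        exact lt_of_mul_lt_mul_right this hα0.le
      have k2 : (h 1 : ℝ) < (Q' : ℝ) + 1 := by
        have : (h 1 : ℝ) * α < ((Q' : ℝ) + 1) * α := by nlinarith
        exact lt_of_mul_lt_mul_right this hα0.le
      have k1' : Q' < (h 1 : ℤ) + 1 := by exact_mod_cast k1
      have k2' : (h 1 : ℤ) < Q' + 1 := by exact_mod_cast k2
      refine ⟨1, le_rfl, ?_, ?_, ?_, ?_⟩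
      · rw [hp0]; omega
      · rw [hq0]; omega
      · rw [hp1]; omega
      · rw [hq1]; omega
    · -- inductive step
      have hP1 : 1 ≤ P := by omega
      have hQltQ' : Q < Q' := by
        rcases eq_or_lt_of_le hQQ' with heq | hlt
        · exfalso
          subst heq
          have hdvd : Q ∣ (1 : ℤ) := by
            rcases hdet with hd | hd
            · exact ⟨P - P', by linear_combination -hd⟩
            · exact ⟨P' - P, by linear_combination hd⟩
          have hQle := Int.le_of_dvd one_pos hdvd
          have hQ1 : Q = 1 := by omega
          have hPe : P = 1 := by omega
          have hP'e : P' = 1 := by omega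
          rw [hQ1, hPe, hP'e] at hdet
          omega
        · exact hlt
      have hdiv := Int.mul_ediv_add_emod (Q' - 1) Q
      have hm0 : 0 ≤ (Q' - 1) % Q := Int.emod_nonneg _ (by omega)
      have hm1 : (Q' - 1) % Q < Q := Int.emod_lt_of_pos _ (by omega)
      set a : ℤ := (Q' - 1) / Q with hadef
      set Q₀ : ℤ := Q' - Q * a with hQ₀def
      set P₀ : ℤ := P' - P * a with hP₀def
      have hQ₀1 : 1 ≤ Q₀ := by rw [hQ₀def]; linarith
      have hQ₀Q : Q₀ ≤ Q := by rw [hQ₀def]; linarith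
      have ha1 : 1 ≤ a := by
        by_contra hc
        push_neg at hc
        have h2 : Q * a ≤ Q * 0 := mul_le_mul_of_nonneg_left (by omega) (by omega)
        linarith
      have hdet' : P₀ * Q - P * Q₀ = -(P * Q' - P' * Q) := by
        rw [hP₀def, hQ₀def]; ring
      have hdetn : P₀ * Q - P * Q₀ = 1 ∨ P₀ * Q - P * Q₀ = -1 := by
        rcases hdet with hd | hd
        · right; linarith
        · left; linarith
      have hPQ₀ : 1 ≤ P * Q₀ := by
        have := mul_pos (show (0:ℤ) < P by omega) (show (0:ℤ) < Q₀ by omega)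
        omega
      have hP₀0 : 0 ≤ P₀ := by
        have h6 : 0 ≤ P₀ * Q := by rcases hdetn with hd | hd <;> linarith
        by_contra hc
        push_neg at hc
        have h7 : P₀ * Q ≤ (-1) * Q := mul_le_mul_of_nonneg_right (by omega) (by omega)
        linarith
      have hP₀Q₀ : P₀ ≤ Q₀ := by
        have key : (Q₀ - P₀) * Q = Q₀ * (Q - P) + (P * Q' - P' * Q) := by
          rw [hP₀def, hQ₀def]; ring
        have h8 : 0 ≤ (Q₀ - P₀) * Q := by
          rcases hdet with hd | hd
          · have h9 : 0 ≤ Q₀ * (Q - P) := mul_nonneg (by omega) (by omega)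
            linarith
          · have hPneQ : P < Q := by
              rcases eq_or_lt_of_le hPQ with heq2 | hlt2
              · exfalso
                have h10 : P * Q' - P' * Q = Q * (Q' - P') := by rw [← heq2]; ring
                have h11 : 0 ≤ Q * (Q' - P') := mul_nonneg (by omega) (by omega)
                omega
              · exact hlt2
            have h9 : Q₀ * 1 ≤ Q₀ * (Q - P) := mul_le_mul_of_nonneg_left (by omega) (by omega)
            linarith
        by_contra hc
        push_neg at hc
        have h10 : (Q₀ - P₀) * Q ≤ (-1) * Q := mul_le_mul_of_nonneg_right (by omega) (by omega)
        linarith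
      -- real analysis of t'
      set N : ℝ := (Q' : ℝ) * α - P' with hNdef
      set D : ℝ := -(Q : ℝ) * α + P with hDdef
      have haR : (1:ℝ) ≤ (a : ℝ) := by exact_mod_cast ha1
      have hbounds := tprime_bounds N D (a:ℝ) haR ht0 ht1
      have hden_eq : (-(Q₀ : ℝ) * α + (P₀ : ℝ)) = -(N + (a:ℝ) * D) := by
        rw [hNdef, hDdef, hQ₀def, hP₀def]; push_cast; ring
      have hnum_eq : ((Q : ℝ) * α - (P : ℝ)) = -D := by rw [hDdef]; ring
      have ht'eq : ((Q : ℝ) * α - (P : ℝ)) / (-(Q₀ : ℝ) * α + (P₀ : ℝ)) = D / (N + (a:ℝ) * D) := by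
        rw [hnum_eq, hden_eq, neg_div_neg_eq]
      have hn' : Q ≤ (n : ℤ) := by push_cast at hn; omega
      obtain ⟨s, hs1, hP₀e, hQ₀e, hPe, hQe⟩ :=
        ih P₀ P Q₀ Q hn' hdetn hQ₀1 hQ₀Q hP₀0 hP₀Q₀ hP1 hPQ
          (by rw [ht'eq]; exact hbounds.1) (by rw [ht'eq]; exact hbounds.2)
      -- now show a = h (s+1)
      have hEs0 := (hconv s).1
      have hEsne : (q s : ℝ) * α - (p s : ℝ) ≠ 0 := by
        intro hz; rw [hz, mul_zero] at hEs0; exact lt_irrefl 0 hEs0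
      have hEs10 := (hconv (s-1)).1
      have hEs1ne : (q (s-1) : ℝ) * α - (p (s-1) : ℝ) ≠ 0 := by
        intro hz; rw [hz, mul_zero] at hEs10; exact lt_irrefl 0 hEs10
      have hDe : D = -((q s : ℝ) * α - (p s : ℝ)) := by
        rw [hDdef, hQe, hPe]; push_cast; ring
      have hdenne : N + (a:ℝ) * D ≠ 0 := by
        intro hz
        have h01 := hbounds.1
        rw [hz, div_zero] at h01
        exact lt_irrefl 0 h01
      have hP'val : P' = P₀ + P * a := by rw [hP₀def]; ring
      have hQ'val : Q' = Q₀ + Q * a := by rw [hQ₀def]; ring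
      have hNval : N = ((q (s-1) : ℝ) * α - (p (s-1) : ℝ))
          + (a:ℝ) * ((q s : ℝ) * α - (p s : ℝ)) := by
        rw [hNdef, hQ'val, hP'val, hQ₀e, hP₀e, hQe, hPe]; push_cast; ring
      have hrecE := Erec α h p q hqrec hprec (s+1) (by omega)
      have e1 : s+1-1 = s := by omega
      have e2 : s+1-2 = s-1 := by omega
      rw [e1, e2] at hrecE
      -- τ' bounds
      have hu : ((-1:ℝ)^(s+1)) ≠ 0 := pow_ne_zero _ (by norm_num)
      have hA2 := (hconv (s+1)).1
      have hBeq : (-1:ℝ)^(s+1) * (-((q s : ℝ) * α - (p s : ℝ)))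
          = (-1:ℝ)^s * ((q s : ℝ) * α - (p s : ℝ)) := by rw [pow_succ]; ring
      have hB2 : 0 < (-1:ℝ)^(s+1) * (-((q s : ℝ) * α - (p s : ℝ))) := by
        rw [hBeq]; exact hEs0
      have hmdm : ((q (s+1) : ℝ) * α - (p (s+1) : ℝ)) / (-((q s : ℝ) * α - (p s : ℝ)))
          = ((-1:ℝ)^(s+1) * ((q (s+1) : ℝ) * α - (p (s+1) : ℝ)))
            / ((-1:ℝ)^(s+1) * (-((q s : ℝ) * α - (p s : ℝ)))) :=
        (mul_div_mul_left _ _ hu).symm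
      have hτpos : 0 < ((q (s+1) : ℝ) * α - (p (s+1) : ℝ)) / (-((q s : ℝ) * α - (p s : ℝ))) := by
        rw [hmdm]; exact div_pos hA2 hB2
      have hτlt1 : ((q (s+1) : ℝ) * α - (p (s+1) : ℝ)) / (-((q s : ℝ) * α - (p s : ℝ))) < 1 := by
        rw [hmdm, div_lt_one hB2, hBeq]
        exact Edec α h p q hh hqrec hprec hconv s
      -- sum equation
      have hEsne' : -((q s : ℝ) * α - (p s : ℝ)) ≠ 0 := neg_ne_zero.mpr hEsne
      have hsum : (a:ℝ) + N / D
          = (h (s+1) : ℝ) + ((q (s+1) : ℝ) * α - (p (s+1) : ℝ)) / (-((q s : ℝ) * α - (p s : ℝ))) := by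
        rw [hDe]
        exact sum_eq _ _ _ _ _ _ hEsne hNval hrecE
      have hcomp1 : (a:ℝ) < (h (s+1) : ℝ) + 1 := by linarith [hsum, hτlt1, ht0]
      have hcomp2 : (h (s+1) : ℝ) < (a:ℝ) + 1 := by linarith [hsum, hτpos, ht1]
      have haH : a = ((h (s+1) : ℕ) : ℤ) := by
        have c1 : a < ((h (s+1) : ℕ) : ℤ) + 1 := by exact_mod_cast hcomp1
        have c2 : ((h (s+1) : ℕ) : ℤ) < a + 1 := by exact_mod_cast hcomp2
        omega
      have hpr := hprec (s+1) (by omega)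
      have hqr := hqrec (s+1) (by omega)
      rw [e1, e2] at hpr hqr
      have hprZ : ((p (s+1) : ℤ)) = (h (s+1) : ℤ) * (p s : ℤ) + (p (s-1) : ℤ) := by
        exact_mod_cast hpr
      have hqrZ : ((q (s+1) : ℤ)) = (h (s+1) : ℤ) * (q s : ℤ) + (q (s-1) : ℤ) := by
        exact_mod_cast hqr
      refine ⟨s+1, by omega, ?_, ?_, ?_, ?_⟩
      · simpa [Nat.add_sub_cancel] using hPe
      · simpa [Nat.add_sub_cancel] using hQe
      · rw [hP'val, hP₀e, hPe, haH, hprZ]; ring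
      · rw [hQ'val, hQ₀e, hQe, haH, hqrZ]; ring
end CFAux

theorem consecutive_convergents_characterization
    (α : ℝ) (hα : α ∈ Set.Ioo (0 : ℝ) 1) (hirr : Irrational α)
    (h p q : ℕ → ℕ)
    (hh : ∀ s, 1 ≤ s → 1 ≤ h s)
    (hq0 : q 0 = 1) (hq1 : q 1 = h 1)
    (hqrec : ∀ s, 2 ≤ s → q s = h s * q (s - 1) + q (s - 2))
    (hp0 : p 0 = 0) (hp1 : p 1 = 1)
    (hprec : ∀ s, 2 ≤ s → p s = h s * p (s - 1) + p (s - 2))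
    -- `p_s/q_s` are the convergents of the continued fraction
    -- `α = [0; h₁, h₂, …]`.
    (hconv : ∀ s : ℕ, 0 < (-1 : ℝ) ^ s * ((q s : ℝ) * α - (p s : ℝ)) ∧
      |(q s : ℝ) * α - (p s : ℝ)| < 1 / (q (s + 1) : ℝ))
    (P P' Q Q' : ℤ)
    (hdet : P * Q' - P' * Q = 1 ∨ P * Q' - P' * Q = -1)
    (hQ : 1 ≤ Q) (hQQ' : Q ≤ Q') (hP0 : 0 ≤ P) (hPQ : P ≤ Q)
    (hP' : 1 ≤ P') (hP'Q' : P' ≤ Q')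
    (ht0 : 0 < ((Q' : ℝ) * α - P') / (-(Q : ℝ) * α + P))
    (ht1 : ((Q' : ℝ) * α - P') / (-(Q : ℝ) * α + P) < 1) :
    ∃ s : ℕ, 1 ≤ s ∧
      (P : ℝ) / (Q : ℝ) = cfVal ((List.range' 1 (s - 1)).map h) ∧
      (P' : ℝ) / (Q' : ℝ) = cfVal ((List.range' 1 s).map h) ∧
      (Q : ℝ) / (Q' : ℝ) = cfVal (((List.range' 1 s).map h).reverse) ∧
      Tendsto (fun m : ℕ => cfVal ((List.range' (s + 1) m).map h)) atTop
        (𝓝 (((Q' : ℝ) * α - P') / (-(Q : ℝ) * α + P))) := by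
  have qpos := CFAux.q_pos h q hh hq0 hq1 hqrec
  obtain ⟨s, hs1, hPe, hQe, hP'e, hQ'e⟩ :=
    CFAux.core α hα h p q hh hq0 hq1 hqrec hp0 hp1 hprec hconv (Q'.toNat) P P' Q Q'
      (by omega) hdet hQ hQQ' hP0 hPQ hP' hP'Q' ht0 ht1
  have hPR : (P : ℝ) = ((p (s-1) : ℕ) : ℝ) := by exact_mod_cast hPe
  have hQR : (Q : ℝ) = ((q (s-1) : ℕ) : ℝ) := by exact_mod_cast hQe
  have hP'R : (P' : ℝ) = ((p s : ℕ) : ℝ) := by exact_mod_cast hP'e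
  have hQ'R : (Q' : ℝ) = ((q s : ℕ) : ℝ) := by exact_mod_cast hQ'e
  refine ⟨s, hs1, ?_, ?_, ?_, ?_⟩
  · rcases eq_or_lt_of_le hs1 with h1 | h2
    · have hP0' : (P : ℝ) = 0 := by
        rw [hPR, ← h1]
        norm_num [hp0]
      rw [hP0', zero_div, ← h1]
      simp [cfVal]
    · have hpv := CFAux.prefix_val h p q hh hq0 hq1 hqrec hp0 hp1 hprec qpos (s-1)
        (by omega) 0 le_rfl
      rw [CFAux.cfVal_eq_cfT, hpv]
      simp only [mul_zero, add_zero]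
      rw [hPR, hQR]
  · have hpv := CFAux.prefix_val h p q hh hq0 hq1 hqrec hp0 hp1 hprec qpos s hs1 0 le_rfl
    rw [CFAux.cfVal_eq_cfT, hpv]
    simp only [mul_zero, add_zero]
    rw [hP'R, hQ'R]
  · rw [CFAux.mirror_val h p q hh hq0 hq1 hqrec qpos s hs1, hQR, hQ'R]
  · have htt := CFAux.tail_tendsto α h p q hh hq0 hq1 hqrec hp0 hp1 hprec hconv s hs1
    have hveq : ((Q' : ℝ) * α - P') / (-(Q : ℝ) * α + P)
        = ((q s : ℝ) * α - (p s : ℝ)) / (-(q (s-1) : ℝ) * α + (p (s-1) : ℝ)) := by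
      rw [hPR, hQR, hP'R, hQ'R]
    rw [hveq]
    exact htt
end
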